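/- Let λ, a ∈ ℝ with a ≠ 0, and set μ_j := −j⁴π⁴ + λ j²π² and D_j := λ² − 4(a + μ_j) for positive integers j, and s_j := √((λ + √D_j)/2) whenever D_j > 0 and λ + √D_j > 0. Then there exist a constant C > 0 and a positive integer J such that for all j ≥ J, s_j is well defined, sin(s_j) ≠ 0, and |cos(s_j)/sin(s_j)| ≤ C j³. -/

import Mathlib

open Real

set_option maxHeartbeats 2000000 in
private theorem stmt4_aux (lam a : ℝ) (ha : a ≠ 0) (j : ℕ)
    (hN : |lam| + |a| + 1 ≤ (j : ℝ)) :
    lam ^ 2 - 4 * (a + (-(j : ℝ) ^ 4 * π ^ 4 + lam * (j : ℝ) ^ 2 * π ^ 2)) > 0 ∧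
    lam + Real.sqrt
      (lam ^ 2 - 4 * (a + (-(j : ℝ) ^ 4 * π ^ 4 + lam * (j : ℝ) ^ 2 * π ^ 2))) > 0 ∧
    Real.sin (Real.sqrt ((lam + Real.sqrt
      (lam ^ 2 - 4 * (a + (-(j : ℝ) ^ 4 * π ^ 4 + lam * (j : ℝ) ^ 2 * π ^ 2)))) / 2)) ≠ 0 ∧
    |Real.cos (Real.sqrt ((lam + Real.sqrt
        (lam ^ 2 - 4 * (a + (-(j : ℝ) ^ 4 * π ^ 4 + lam * (j : ℝ) ^ 2 * π ^ 2)))) / 2)) /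
      Real.sin (Real.sqrt ((lam + Real.sqrt
        (lam ^ 2 - 4 * (a + (-(j : ℝ) ^ 4 * π ^ 4 + lam * (j : ℝ) ^ 2 * π ^ 2)))) / 2))|
      ≤ 18 * π ^ 3 / |a| * (j : ℝ) ^ 3 := by
  have hπ : (3:ℝ) < π := Real.pi_gt_three
  have hπ0 : (0:ℝ) < π := Real.pi_pos
  have ha' : (0:ℝ) < |a| := abs_pos.mpr ha
  set n : ℝ := (j : ℝ) with hn_def
  have hn1 : (1:ℝ) ≤ n := by
    have := abs_nonneg lam; have := abs_nonneg a; linarith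
  have hla : |lam| ≤ n := by have := abs_nonneg a; linarith
  have haa : |a| ≤ n := by have := abs_nonneg lam; linarith
  have hlam1 : -n ≤ lam ∧ lam ≤ n :=
    ⟨by have := neg_abs_le lam; linarith, by have := le_abs_self lam; linarith⟩
  set D : ℝ := lam ^ 2 - 4 * (a + (-n ^ 4 * π ^ 4 + lam * n ^ 2 * π ^ 2)) with hD_def
  set t : ℝ := 2 * n ^ 2 * π ^ 2 - lam with ht_def
  have hnπ : 3 ≤ n * π := by nlinarith
  have h3n : 3 * n ≤ n * π := by nlinarith
  have hn2π2 : 9 ≤ n ^ 2 * π ^ 2 := by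
    have h := mul_le_mul hnπ hnπ (by norm_num) (by positivity)
    nlinarith [h]
  have hx1 : 9 * n ≤ n ^ 2 * π ^ 2 := by
    have h := mul_le_mul h3n hnπ (by norm_num) (by positivity)
    nlinarith [h]
  have hx2 : 27 * n ≤ n ^ 3 * π ^ 3 := by
    have h := mul_le_mul h3n hn2π2 (by norm_num) (by positivity)
    nlinarith [h]
  have ht_lo : n ^ 2 * π ^ 2 ≤ t := by
    have := hlam1.2
    nlinarith
  have ht_hi : t ≤ 3 * n ^ 2 * π ^ 2 := by
    have := hlam1.1
    nlinarith
  have htpos : 0 < t := by nlinarith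
  have hDeq : D = t ^ 2 - 4 * a := by rw [hD_def, ht_def]; ring
  have hta : 8 * |a| ≤ t ^ 2 := by nlinarith [sq_nonneg (n*π), abs_nonneg a]
  have habs1 : -|a| ≤ a := neg_abs_le a
  have habs2 : a ≤ |a| := le_abs_self a
  have hDpos : 0 < D := by nlinarith
  have hD_lo : t ^ 2 / 2 ≤ D := by nlinarith
  have hD_hi : D ≤ 4 * t ^ 2 := by nlinarith
  set q : ℝ := Real.sqrt D with hq_def
  have hq0 : 0 ≤ q := Real.sqrt_nonneg _
  have hqsq : q ^ 2 = D := Real.sq_sqrt hDpos.le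
  have hq_lo : t / 2 ≤ q := by
    apply Real.le_sqrt_of_sq_le
    nlinarith
  have hq_hi : q ≤ 2 * t := by nlinarith [hqsq, hq0]
  have hlamD : 0 < lam + q := by nlinarith
  set s : ℝ := Real.sqrt ((lam + q) / 2) with hs_def
  have hs0 : 0 ≤ s := Real.sqrt_nonneg _
  have hs2 : s ^ 2 = (lam + q) / 2 := Real.sq_sqrt (by linarith)
  have hqt_lo : n ^ 2 * π ^ 2 ≤ q + t := by linarith
  have hqt_hi : q + t ≤ 9 * n ^ 2 * π ^ 2 := by linarith
  have key : (s ^ 2 - n ^ 2 * π ^ 2) * (q + t) = -(2 * a) := by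
    linear_combination (q + t) * hs2 + (1/2) * hqsq + (1/2) * hDeq + ((q + t)/2) * ht_def
  have keyabs : |s ^ 2 - n ^ 2 * π ^ 2| * (q + t) = 2 * |a| := by
    have h := congrArg abs key
    rwa [abs_mul, abs_neg, abs_of_pos (by linarith : (0:ℝ) < q + t), abs_mul,
      abs_of_pos (by norm_num : (0:ℝ) < 2)] at h
  set E : ℝ := |s ^ 2 - n ^ 2 * π ^ 2| with hE_def
  have hE0 : 0 ≤ E := abs_nonneg _
  have P1 : E * (n ^ 2 * π ^ 2) ≤ 2 * |a| := by
    calc E * (n ^ 2 * π ^ 2) ≤ E * (q + t) := by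
          apply mul_le_mul_of_nonneg_left hqt_lo hE0
      _ = 2 * |a| := keyabs
  have P2 : 2 * |a| ≤ E * (9 * n ^ 2 * π ^ 2) := by
    calc 2 * |a| = E * (q + t) := keyabs.symm
      _ ≤ E * (9 * n ^ 2 * π ^ 2) := mul_le_mul_of_nonneg_left hqt_hi hE0
  have hnπpos : 0 < n * π := by positivity
  have hE_le : E ≤ 2 * n := by
    have h9 : (1:ℝ) ≤ n ^ 2 * π ^ 2 := by linarith
    have h := mul_le_mul_of_nonneg_left h9 hE0
    rw [mul_one] at h
    linarith
  have hssq_hi : s ^ 2 ≤ (2 * n * π) ^ 2 := by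
    have h1 : s ^ 2 - n ^ 2 * π ^ 2 ≤ E := le_abs_self _
    have h2 : (2 * n * π) ^ 2 = 4 * (n ^ 2 * π ^ 2) := by ring
    have h3 : 2 * n ≤ 2 * (n ^ 2 * π ^ 2) := by linarith
    linarith
  have hs_hi : s ≤ 2 * n * π :=
    le_of_pow_le_pow_left₀ two_ne_zero (by positivity) hssq_hi
  have hsum_lo : n * π ≤ s + n * π := by linarith
  have hsum_hi : s + n * π ≤ 3 * n * π := by linarith
  set F : ℝ := |s - n * π| with hF_def
  have hF0 : 0 ≤ F := abs_nonneg _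
  have hEF : E = F * (s + n * π) := by
    rw [hE_def, hF_def, show s ^ 2 - n ^ 2 * π ^ 2 = (s - n * π) * (s + n * π) by ring,
      abs_mul, abs_of_pos (by linarith : (0:ℝ) < s + n * π)]
  have Q1 : F * (n ^ 3 * π ^ 3) ≤ 2 * |a| := by
    have h1 : F * (n * π) ≤ F * (s + n * π) := mul_le_mul_of_nonneg_left hsum_lo hF0
    have h2 : F * (n * π) * (n ^ 2 * π ^ 2) ≤ F * (s + n * π) * (n ^ 2 * π ^ 2) :=
      mul_le_mul_of_nonneg_right h1 (by positivity)
    calc F * (n ^ 3 * π ^ 3) = F * (n * π) * (n ^ 2 * π ^ 2) := by ring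
      _ ≤ F * (s + n * π) * (n ^ 2 * π ^ 2) := h2
      _ = E * (n ^ 2 * π ^ 2) := by rw [hEF]
      _ ≤ 2 * |a| := P1
  have Q2 : 2 * |a| ≤ F * (27 * n ^ 3 * π ^ 3) := by
    have h1 : F * (s + n * π) ≤ F * (3 * n * π) := mul_le_mul_of_nonneg_left hsum_hi hF0
    have h2 : F * (s + n * π) * (9 * n ^ 2 * π ^ 2) ≤ F * (3 * n * π) * (9 * n ^ 2 * π ^ 2) :=
      mul_le_mul_of_nonneg_right h1 (by positivity)
    calc 2 * |a| ≤ E * (9 * n ^ 2 * π ^ 2) := P2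
      _ = F * (s + n * π) * (9 * n ^ 2 * π ^ 2) := by rw [hEF]
      _ ≤ F * (3 * n * π) * (9 * n ^ 2 * π ^ 2) := h2
      _ = F * (27 * n ^ 3 * π ^ 3) := by ring
  have hn3π3 : 27 * n ≤ n ^ 3 * π ^ 3 := hx2
  have hF_small : F ≤ 1 := by
    by_contra hc
    push_neg at hc
    have h := mul_le_mul_of_nonneg_right hc.le (by positivity : (0:ℝ) ≤ n ^ 3 * π ^ 3)
    rw [one_mul] at h
    linarith
  have hF_pos : 0 < F := by
    rcases hF0.lt_or_eq with h | h
    · exact h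
    · exfalso
      rw [← h, zero_mul] at Q2
      linarith
  -- sin s
  have hsin_eq : |Real.sin s| = |Real.sin (s - n * π)| := by
    have h : Real.sin ((s - n * π) + (j : ℤ) * π) = (-1) ^ (j : ℤ) * Real.sin (s - n * π) :=
      Real.sin_add_int_mul_pi _ _
    have h2 : (s - n * π) + (j : ℤ) * π = s := by
      rw [hn_def]; push_cast; ring
    rw [h2] at h
    rw [h, abs_mul, show ((-1:ℝ)) ^ ((j:ℤ)) = ((-1:ℝ)) ^ j from zpow_natCast _ _,
      abs_pow, abs_neg, abs_one, one_pow, one_mul]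
  have hsinF : (3/4) * F ≤ |Real.sin (s - n * π)| := by
    have hcube : F - F ^ 3 / 4 < Real.sin F := by
      have := Real.sin_gt_sub_cube hF_pos; have := pow_nonneg hF0 3; linarith
    have hF3 : F ^ 3 ≤ F := by
      have h := pow_le_pow_of_le_one hF0 hF_small (by norm_num : 1 ≤ 3)
      rwa [pow_one] at h
    have h34 : (3/4) * F ≤ F - F ^ 3 / 4 := by linarith
    have habs : Real.sin F ≤ |Real.sin (s - n * π)| := by
      rcases abs_cases (s - n * π) with ⟨h1, _⟩ | ⟨h1, _⟩
      · rw [hF_def, h1]; exact le_abs_self _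
      · rw [hF_def, h1, Real.sin_neg]
        rw [← abs_neg (Real.sin (s - n * π))]
        exact le_abs_self _
    linarith
  have hsin_lb : |a| ≤ |Real.sin s| * (18 * n ^ 3 * π ^ 3) := by
    rw [hsin_eq]
    have h1 := mul_le_mul_of_nonneg_right hsinF
      (by positivity : (0:ℝ) ≤ 27 * n ^ 3 * π ^ 3)
    linarith
  have hsin_pos : 0 < |Real.sin s| := by
    rcases (abs_nonneg (Real.sin s)).lt_or_eq with h | h
    · exact h
    · exfalso
      rw [← h, zero_mul] at hsin_lb
      linarith
  have hsin_ne : Real.sin s ≠ 0 := by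
    intro h; rw [h, abs_zero] at hsin_pos; exact lt_irrefl _ hsin_pos
  refine ⟨hDpos, hlamD, hsin_ne, ?_⟩
  rw [abs_div, div_le_iff₀ hsin_pos]
  have hcos : |Real.cos s| ≤ 1 := Real.abs_cos_le_one s
  have hgoal : 1 ≤ 18 * π ^ 3 / |a| * n ^ 3 * |Real.sin s| := by
    rw [show 18 * π ^ 3 / |a| * n ^ 3 * |Real.sin s|
        = |Real.sin s| * (18 * n ^ 3 * π ^ 3) / |a| by ring]
    rw [le_div_iff₀ ha']
    linarith
  calc |Real.cos s| ≤ 1 := hcos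
    _ ≤ 18 * π ^ 3 / |a| * n ^ 3 * |Real.sin s| := hgoal

/-- With μ_j := −j⁴π⁴ + λj²π², D_j := λ² − 4(a + μ_j) and s_j := √((λ + √D_j)/2)
(well defined for large j), one has sin(s_j) ≠ 0 and |cot(s_j)| = O(j³), provided a ≠ 0. -/
theorem stmt4 (lam a : ℝ) (ha : a ≠ 0) :
    ∃ C > (0 : ℝ), ∃ J : ℕ+, ∀ j : ℕ+, J ≤ j →
      (let mu : ℝ := -(j : ℝ) ^ 4 * π ^ 4 + lam * (j : ℝ) ^ 2 * π ^ 2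
       let D : ℝ := lam ^ 2 - 4 * (a + mu)
       let s : ℝ := Real.sqrt ((lam + Real.sqrt D) / 2)
       D > 0 ∧ lam + Real.sqrt D > 0 ∧ Real.sin s ≠ 0 ∧
        |Real.cos s / Real.sin s| ≤ C * (j : ℝ) ^ 3) := by
  have ha' : (0:ℝ) < |a| := abs_pos.mpr ha
  refine ⟨18 * π ^ 3 / |a|, by positivity, ⟨⌈|lam| + |a|⌉₊ + 1, Nat.succ_pos _⟩, ?_⟩
  intro j hj
  have hN : |lam| + |a| + 1 ≤ ((j : ℕ) : ℝ) := by
    have h1 : (⌈|lam| + |a|⌉₊ + 1 : ℕ) ≤ (j : ℕ) := hj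
    have h2 : |lam| + |a| ≤ (⌈|lam| + |a|⌉₊ : ℝ) := Nat.le_ceil _
    have h3 : ((⌈|lam| + |a|⌉₊ + 1 : ℕ) : ℝ) ≤ ((j : ℕ) : ℝ) := by exact_mod_cast h1
    push_cast at h3
    linarith
  exact stmt4_aux lam a ha (j : ℕ) hN
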